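/- Extension property: Let P be a special product rule. Every function D : X → ℚ[X]⁰ extends uniquely to a ℚ-linear map D̃ : ℚ[X]⁰ → ℚ[X]⁰ satisfying D̃(α·β) = P(α, D̃α, β, D̃β) for all α, β ∈ ℚ[X]⁰, where P(α, D̃α, β, D̃β) denotes the evaluation of the term P in the commutative polynomial ring under the substitution x ↦ α, ẋ ↦ D̃α, y ↦ β, ẏ ↦ D̃β. -/

import Mathlib

namespace PSeries

/-- A (formal power) series over alphabet `A` with rational coefficients. -/
abbrev Series (A : Type) : Type := List A → ℚ

/-- Left derivative of a series by a letter. -/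
def deriv {A : Type} (a : A) (f : Series A) : Series A := fun w => f (a :: w)

/-- Right derivative of a series by a letter. -/
def derivR {A : Type} (b : A) (f : Series A) : Series A := fun w => f (w ++ [b])

/-- Reversal of a series. -/
def rev {A : Type} (f : Series A) : Series A := fun w => f w.reverse

/-- Terms over a set of variables `X`:  `u ::= x | 0 | c·u | u + v | u * v`. -/
inductive Term (X : Type) : Type
  | var : X → Term X
  | zero : Term X
  | smul : ℚ → Term X → Term X
  | add : Term X → Term X → Term X
  | mul : Term X → Term X → Term X

namespace Term

/-- Simultaneous substitution of terms for variables. -/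
def subst {X Y : Type} : Term X → (X → Term Y) → Term Y
  | var x, ρ => ρ x
  | zero, _ => zero
  | smul c u, ρ => smul c (u.subst ρ)
  | add u v, ρ => add (u.subst ρ) (v.subst ρ)
  | mul u v, ρ => mul (u.subst ρ) (v.subst ρ)

/-- Semantics of a term on series, with the product symbol interpreted by `m`. -/
def evalS {A X : Type} (m : Series A → Series A → Series A) :
    Term X → (X → Series A) → Series A
  | var x, ρ => ρ x
  | zero, _ => 0
  | smul c u, ρ => c • u.evalS m ρ
  | add u v, ρ => u.evalS m ρ + v.evalS m ρ
  | mul u v, ρ => m (u.evalS m ρ) (v.evalS m ρ)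

/-- Evaluation of a term in the rationals (product is rational multiplication). -/
def evalQ {X : Type} : Term X → (X → ℚ) → ℚ
  | var x, F => F x
  | zero, _ => 0
  | smul c u, F => c * u.evalQ F
  | add u v, F => u.evalQ F + v.evalQ F
  | mul u v, F => u.evalQ F * v.evalQ F

/-- Evaluation of a term in a commutative `ℚ`-algebra. -/
def evalA {R : Type} [CommRing R] [Algebra ℚ R] {X : Type} :
    Term X → (X → R) → R
  | var x, ρ => ρ x
  | zero, _ => 0
  | smul c u, ρ => c • u.evalA ρ
  | add u v, ρ => u.evalA ρ + v.evalA ρ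
  | mul u v, ρ => u.evalA ρ * v.evalA ρ

end Term

/-- `m` is the `P`-product for the product rule `P`; that is, `m` satisfies the
two defining equations `(f*g)(ε) = f(ε)·g(ε)` and `δ_a (f*g) = P(f, δ_a f, g, δ_a g)`. -/
def IsPProduct {A : Type} (P : Term (Fin 4)) (m : Series A → Series A → Series A) : Prop :=
  (∀ f g : Series A, m f g [] = f [] * g []) ∧
  (∀ (f g : Series A) (a : A),
    deriv a (m f g) = P.evalS m ![f, deriv a f, g, deriv a g])

/-- The smallest congruence on terms generated by the axioms of
commutative (not necessarily unital) `ℚ`-algebras. -/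
inductive TEq {X : Type} : Term X → Term X → Prop
  | refl (u : Term X) : TEq u u
  | symm {u v : Term X} : TEq u v → TEq v u
  | trans {u v w : Term X} : TEq u v → TEq v w → TEq u w
  | smul_congr (c : ℚ) {u v : Term X} : TEq u v → TEq (.smul c u) (.smul c v)
  | add_congr {u u' v v' : Term X} : TEq u u' → TEq v v' → TEq (.add u v) (.add u' v')
  | mul_congr {u u' v v' : Term X} : TEq u u' → TEq v v' → TEq (.mul u v) (.mul u' v')
  | one_smul (u : Term X) : TEq (.smul 1 u) u
  | smul_smul (c d : ℚ) (u : Term X) : TEq (.smul c (.smul d u)) (.smul (c * d) u)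
  | add_smul (c d : ℚ) (u : Term X) : TEq (.smul (c + d) u) (.add (.smul c u) (.smul d u))
  | smul_add (c : ℚ) (u v : Term X) : TEq (.smul c (.add u v)) (.add (.smul c u) (.smul c v))
  | add_zero (u : Term X) : TEq (.add u .zero) u
  | add_assoc (u v w : Term X) : TEq (.add (.add u v) w) (.add u (.add v w))
  | add_comm (u v : Term X) : TEq (.add u v) (.add v u)
  | neg_cancel (u : Term X) : TEq (.add u (.smul (-1) u)) .zero
  | mul_addl (u v w : Term X) : TEq (.mul (.add u v) w) (.add (.mul u w) (.mul v w))
  | mul_smull (c : ℚ) (u v : Term X) : TEq (.mul (.smul c u) v) (.smul c (.mul u v))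
  | mul_assoc (u v w : Term X) : TEq (.mul (.mul u v) w) (.mul u (.mul v w))
  | mul_comm (u v : Term X) : TEq (.mul u v) (.mul v u)

/-- A product rule `P` (a term over the variables `x = 0, ẋ = 1, y = 2, ẏ = 3`)
is special: it satisfies (P-add), (P-assoc) and (P-comm) up to the congruence `TEq`.
In the first two equations the six variables are `x = 0, ẋ = 1, y = 2, ẏ = 3, z = 4, ż = 5`. -/
def Special (P : Term (Fin 4)) : Prop :=
  TEq (P.subst (![.add (.var 0) (.var 2), .add (.var 1) (.var 3), .var 4, .var 5] :
        Fin 4 → Term (Fin 6)))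
      (.add (P.subst (![.var 0, .var 1, .var 4, .var 5] : Fin 4 → Term (Fin 6)))
            (P.subst (![.var 2, .var 3, .var 4, .var 5] : Fin 4 → Term (Fin 6)))) ∧
  TEq (P.subst (![.var 0, .var 1, .mul (.var 2) (.var 4),
        P.subst (![.var 2, .var 3, .var 4, .var 5] : Fin 4 → Term (Fin 6))] :
        Fin 4 → Term (Fin 6)))
      (P.subst (![.mul (.var 0) (.var 2),
        P.subst (![.var 0, .var 1, .var 2, .var 3] : Fin 4 → Term (Fin 6)), .var 4, .var 5] :
        Fin 4 → Term (Fin 6))) ∧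
  TEq P (P.subst (![.var 2, .var 3, .var 0, .var 1] : Fin 4 → Term (Fin 4)))

/-- A binary operation on series is bilinear, associative and commutative. -/
def IsBAC {A : Type} (m : Series A → Series A → Series A) : Prop :=
  (∀ f g h : Series A, m (f + g) h = m f h + m g h) ∧
  (∀ (c : ℚ) (f g : Series A), m (c • f) g = c • m f g) ∧
  (∀ f g h : Series A, m f (g + h) = m f g + m f h) ∧
  (∀ (c : ℚ) (f g : Series A), m f (c • g) = c • m f g) ∧
  (∀ f g h : Series A, m (m f g) h = m f (m g h)) ∧
  (∀ f g : Series A, m f g = m g f)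

/-- The smallest set of series containing `0` and the generators `G`, closed under
scalar multiplication, addition, and the product `m`. -/
inductive InAlg {A : Type} (m : Series A → Series A → Series A) (G : Set (Series A)) :
    Series A → Prop
  | zero : InAlg m G 0
  | gen {g : Series A} : g ∈ G → InAlg m G g
  | smul (c : ℚ) {f : Series A} : InAlg m G f → InAlg m G (c • f)
  | add {f g : Series A} : InAlg m G f → InAlg m G g → InAlg m G (f + g)
  | mul {f g : Series A} : InAlg m G f → InAlg m G g → InAlg m G (m f g)

/-- `f` is `P`-finite (w.r.t. the `P`-product `m`): there are finitely many generators
`g 0 = f, g 1, …` all of whose left derivatives lie in the algebra they generate. -/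
def PFinite {A : Type} (m : Series A → Series A → Series A) (f : Series A) : Prop :=
  ∃ (k : ℕ) (g : Fin (k + 1) → Series A),
    g 0 = f ∧ ∀ (i : Fin (k + 1)) (a : A), InAlg m (Set.range g) (deriv a (g i))

/-- A `P`-automaton: output function `out` and transition function `tr`. -/
structure PAutomaton (A X : Type) where
  out : X → ℚ
  tr : A → X → Term X

/-- The `P`-extension of a function `D : X → Term X` to all terms. -/
def pext {X : Type} (P : Term (Fin 4)) (D : X → Term X) : Term X → Term X
  | .var x => D x
  | .zero => .zero
  | .smul c u => .smul c (pext P D u)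
  | .add u v => .add (pext P D u) (pext P D v)
  | .mul u v => P.subst ![u, pext P D u, v, pext P D v]

/-- Homomorphic extension of the output function of a `P`-automaton to all terms. -/
def PAutomaton.outT {A X : Type} (𝒜 : PAutomaton A X) (u : Term X) : ℚ :=
  u.evalQ 𝒜.out

/-- Extension of the (`P`-extended) transition function of a `P`-automaton to words. -/
def trWord {A X : Type} (P : Term (Fin 4)) (𝒜 : PAutomaton A X) :
    List A → Term X → Term X
  | [], u => u
  | a :: w, u => trWord P 𝒜 w (pext P (𝒜.tr a) u)

/-- The semantics of a `P`-automaton: the unique map with `⟦α⟧(ε) = F(α)` and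
`δ_a ⟦α⟧ = ⟦Δ̃_a α⟧`; concretely, `⟦α⟧(w) = F(Δ̃_w α)`. -/
def asem {A X : Type} (P : Term (Fin 4)) (𝒜 : PAutomaton A X) (u : Term X) : Series A :=
  fun w => (trWord P 𝒜 w u).evalQ 𝒜.out

/-- `ℚ[X]⁰`: polynomials in commuting variables `X` with zero constant term. -/
noncomputable def Aug (X : Type) : Submodule ℚ (MvPolynomial X ℚ) where
  carrier := {p | MvPolynomial.coeff 0 p = 0}
  add_mem' := by
    intro a b ha hb
    simp only [Set.mem_setOf_eq, MvPolynomial.coeff_add] at *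
    rw [ha, hb, add_zero]
  zero_mem' := by simp
  smul_mem' := by
    intro c p hp
    simp only [Set.mem_setOf_eq, MvPolynomial.coeff_smul] at *
    rw [hp, smul_zero]

/-- The variable `x` as an element of `ℚ[X]⁰`. -/
noncomputable def Aug.var {X : Type} (x : X) : Aug X :=
  ⟨MvPolynomial.X x, by
    show MvPolynomial.coeff 0 (MvPolynomial.X x) = 0
    simp [MvPolynomial.coeff_X']⟩

/-- The product of two elements of `ℚ[X]⁰`, again in `ℚ[X]⁰`. -/
noncomputable def Aug.mul {X : Type} (p q : Aug X) : Aug X :=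
  ⟨(p : MvPolynomial X ℚ) * (q : MvPolynomial X ℚ), by
    show MvPolynomial.coeff 0 _ = 0
    have hp : MvPolynomial.constantCoeff (p : MvPolynomial X ℚ) = 0 := p.2
    have hq : MvPolynomial.constantCoeff (q : MvPolynomial X ℚ) = 0 := q.2
    have := map_mul MvPolynomial.constantCoeff (p : MvPolynomial X ℚ) (q : MvPolynomial X ℚ)
    simpa [MvPolynomial.constantCoeff_eq, hp, hq] using this⟩

/-- A polynomial `P`-automaton over variables `X`. -/
structure PolyAutomaton (A X : Type) where
  out : X → ℚ
  tr : A → X → Aug X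

/-- Extension to words of a family of (extended) transition maps on `ℚ[X]⁰`. -/
noncomputable def trWordP {A X : Type} (Dt : A → (Aug X →ₗ[ℚ] Aug X)) : List A → Aug X → Aug X
  | [], p => p
  | a :: w, p => trWordP Dt w (Dt a p)

/-- The ideal of `ℚ[X]` generated by all polynomials reachable from the initial
variable `x1` by words of length at most `n`. -/
noncomputable def reachIdeal {A X : Type} (Dt : A → (Aug X →ₗ[ℚ] Aug X)) (x1 : X) (n : ℕ) :
    Ideal (MvPolynomial X ℚ) :=
  Ideal.span {p : MvPolynomial X ℚ |
    ∃ w : List A, w.length ≤ n ∧ p = ((trWordP Dt w (Aug.var x1) : Aug X) : MvPolynomial X ℚ)}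


section Sound

variable {R : Type} [CommRing R] [Algebra ℚ R]

theorem TEq.evalA_eq {X : Type} {u v : Term X} (h : TEq u v) (ρ : X → R) :
    u.evalA ρ = v.evalA ρ := by
  induction h with
  | refl => rfl
  | symm _ ih => exact (ih).symm
  | trans _ _ ih1 ih2 => exact (ih1).trans (ih2)
  | smul_congr c _ ih => simp [Term.evalA, ih]
  | add_congr _ _ ih1 ih2 => simp [Term.evalA, ih1, ih2]
  | mul_congr _ _ ih1 ih2 => simp [Term.evalA, ih1, ih2]
  | one_smul u => simp [Term.evalA]
  | smul_smul c d u => simp [Term.evalA, mul_smul]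
  | add_smul c d u => simp [Term.evalA, _root_.add_smul]
  | smul_add c u v => simp [Term.evalA, smul_add]
  | add_zero u => simp [Term.evalA]
  | add_assoc u v w => simp [Term.evalA, _root_.add_assoc]
  | add_comm u v => simp [Term.evalA, _root_.add_comm]
  | neg_cancel u => simp [Term.evalA]
  | mul_addl u v w => simp [Term.evalA, add_mul]
  | mul_smull c u v => simp [Term.evalA, smul_mul_assoc]
  | mul_assoc u v w => simp [Term.evalA, _root_.mul_assoc]
  | mul_comm u v => simp [Term.evalA, _root_.mul_comm]

theorem Term.evalA_subst {X Y : Type} (u : Term X) (σ : X → Term Y) (ρ : Y → R) :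
    (u.subst σ).evalA ρ = u.evalA (fun x => (σ x).evalA ρ) := by
  induction u with
  | var x => rfl
  | zero => rfl
  | smul c u ih => simp [Term.subst, Term.evalA, ih]
  | add u v ih1 ih2 => simp [Term.subst, Term.evalA, ih1, ih2]
  | mul u v ih1 ih2 => simp [Term.subst, Term.evalA, ih1, ih2]

variable {P : Term (Fin 4)}

theorem Special.evalA_add (hP : Special P) (p d p' d' q e : R) :
    P.evalA ![p + p', d + d', q, e] = P.evalA ![p, d, q, e] + P.evalA ![p', d', q, e] := by
  have h := hP.1.evalA_eq (![p, d, p', d', q, e] : Fin 6 → R)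
  simp only [Term.evalA, Term.evalA_subst] at h
  have e1 : (fun x => Term.evalA ((![.add (.var 0) (.var 2), .add (.var 1) (.var 3), .var 4,
      .var 5] : Fin 4 → Term (Fin 6)) x) (![p, d, p', d', q, e] : Fin 6 → R))
      = ![p + p', d + d', q, e] := by
    funext i; fin_cases i <;> rfl
  have e2 : (fun x => Term.evalA ((![.var 0, .var 1, .var 4, .var 5] : Fin 4 → Term (Fin 6)) x)
      (![p, d, p', d', q, e] : Fin 6 → R)) = ![p, d, q, e] := by
    funext i; fin_cases i <;> rfl
  have e3 : (fun x => Term.evalA ((![.var 2, .var 3, .var 4, .var 5] : Fin 4 → Term (Fin 6)) x)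
      (![p, d, p', d', q, e] : Fin 6 → R)) = ![p', d', q, e] := by
    funext i; fin_cases i <;> rfl
  rw [e1, e2, e3] at h
  exact h

theorem Special.evalA_comm (hP : Special P) (p d q e : R) :
    P.evalA ![p, d, q, e] = P.evalA ![q, e, p, d] := by
  have h := hP.2.2.evalA_eq (![p, d, q, e] : Fin 4 → R)
  simp only [Term.evalA_subst] at h
  have e1 : (fun x => Term.evalA ((![.var 2, .var 3, .var 0, .var 1] : Fin 4 → Term (Fin 4)) x)
      (![p, d, q, e] : Fin 4 → R)) = ![q, e, p, d] := by
    funext i; fin_cases i <;> rfl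
  rw [e1] at h
  exact h

theorem Special.evalA_assoc (hP : Special P) (p d q e r s : R) :
    P.evalA ![p, d, q * r, P.evalA ![q, e, r, s]] =
      P.evalA ![p * q, P.evalA ![p, d, q, e], r, s] := by
  have h := hP.2.1.evalA_eq (![p, d, q, e, r, s] : Fin 6 → R)
  simp only [Term.evalA_subst] at h
  have e2 : (fun x => Term.evalA ((![.var 2, .var 3, .var 4, .var 5] : Fin 4 → Term (Fin 6)) x)
      (![p, d, q, e, r, s] : Fin 6 → R)) = ![q, e, r, s] := by
    funext i; fin_cases i <;> rfl
  have e3 : (fun x => Term.evalA ((![.var 0, .var 1, .var 2, .var 3] : Fin 4 → Term (Fin 6)) x)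
      (![p, d, q, e, r, s] : Fin 6 → R)) = ![p, d, q, e] := by
    funext i; fin_cases i <;> rfl
  have e1 : (fun x => Term.evalA ((![.var 0, .var 1, .mul (.var 2) (.var 4),
      P.subst (![.var 2, .var 3, .var 4, .var 5] : Fin 4 → Term (Fin 6))] : Fin 4 → Term (Fin 6)) x)
      (![p, d, q, e, r, s] : Fin 6 → R)) = ![p, d, q * r, P.evalA ![q, e, r, s]] := by
    funext i; fin_cases i
    · rfl
    · rfl
    · rfl
    · show (P.subst _).evalA _ = _
      rw [Term.evalA_subst, e2]; rfl
  have e4 : (fun x => Term.evalA ((![.mul (.var 0) (.var 2),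
      P.subst (![.var 0, .var 1, .var 2, .var 3] : Fin 4 → Term (Fin 6)), .var 4, .var 5] :
      Fin 4 → Term (Fin 6)) x)
      (![p, d, q, e, r, s] : Fin 6 → R)) = ![p * q, P.evalA ![p, d, q, e], r, s] := by
    funext i; fin_cases i
    · rfl
    · show (P.subst _).evalA _ = _
      rw [Term.evalA_subst, e3]; rfl
    · rfl
    · rfl
  rw [e1, e4] at h
  exact h

theorem Special.evalA_smul (hP : Special P) (c : ℚ) (p d q e : R) :
    P.evalA ![c • p, c • d, q, e] = c • P.evalA ![p, d, q, e] := by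
  let F : ℚ →+ R := AddMonoidHom.mk' (fun c => P.evalA ![c • p, c • d, q, e]) (by
    intro c1 c2
    simp only [_root_.add_smul]
    exact hP.evalA_add _ _ _ _ _ _)
  have h := map_rat_smul F c 1
  simpa [F] using h

theorem Special.evalA_zero (hP : Special P) (q e : R) :
    P.evalA ![0, 0, q, e] = 0 := by
  have h := hP.evalA_smul 0 0 0 q e
  simpa using h

end Sound
section AugLemmas

theorem Aug.mem_iff {X : Type} {p : MvPolynomial X ℚ} :
    p ∈ Aug X ↔ MvPolynomial.coeff 0 p = 0 := Iff.rfl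

theorem Aug.mul_mem {X : Type} {a b : MvPolynomial X ℚ} (ha : a ∈ Aug X) :
    a * b ∈ Aug X := by
  rw [Aug.mem_iff] at *
  have := map_mul MvPolynomial.constantCoeff a b
  simp only [MvPolynomial.constantCoeff_eq] at this
  rw [this, ha, zero_mul]

theorem Term.evalA_mem_aug {X Y : Type} (u : Term Y) (ρ : Y → MvPolynomial X ℚ)
    (h : ∀ y, ρ y ∈ Aug X) : u.evalA ρ ∈ Aug X := by
  induction u with
  | var y => exact h y
  | zero => exact (Aug X).zero_mem
  | smul c u ih => exact (Aug X).smul_mem c ih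
  | add u v ih1 ih2 => exact (Aug X).add_mem ih1 ih2
  | mul u v ih1 ih2 => exact Aug.mul_mem ih1

end AugLemmas

section SPdef

/-- Type synonym for pairs (polynomial, derivative). -/
def SP (X : Type) : Type := MvPolynomial X ℚ × MvPolynomial X ℚ

noncomputable instance {X : Type} : AddCommGroup (SP X) :=
  inferInstanceAs (AddCommGroup (MvPolynomial X ℚ × MvPolynomial X ℚ))

noncomputable instance {X : Type} : Module ℚ (SP X) :=
  inferInstanceAs (Module ℚ (MvPolynomial X ℚ × MvPolynomial X ℚ))

namespace SP

def mk' {X : Type} (p d : MvPolynomial X ℚ) : SP X := (Prod.mk p d : _ × _)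

def p {X : Type} : SP X → MvPolynomial X ℚ := Prod.fst

def d {X : Type} : SP X → MvPolynomial X ℚ := Prod.snd

theorem ext' {X : Type} {s t : SP X} (h1 : s.p = t.p) (h2 : s.d = t.d) : s = t :=
  Prod.ext h1 h2

@[simp] theorem p_add {X : Type} (s t : SP X) : (s + t).p = s.p + t.p := rfl
@[simp] theorem d_add {X : Type} (s t : SP X) : (s + t).d = s.d + t.d := rfl
@[simp] theorem p_smul {X : Type} (c : ℚ) (s : SP X) : (c • s).p = c • s.p := rfl
@[simp] theorem d_smul {X : Type} (c : ℚ) (s : SP X) : (c • s).d = c • s.d := rfl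
@[simp] theorem p_zero {X : Type} : (0 : SP X).p = 0 := rfl
@[simp] theorem d_zero {X : Type} : (0 : SP X).d = 0 := rfl
@[simp] theorem p_mk' {X : Type} (a b : MvPolynomial X ℚ) : (mk' a b).p = a := rfl
@[simp] theorem d_mk' {X : Type} (a b : MvPolynomial X ℚ) : (mk' a b).d = b := rfl

end SP

/-- The multiplication on pairs induced by the product rule `P`. -/
noncomputable def spMul {X : Type} (P : Term (Fin 4)) (s t : SP X) : SP X :=
  SP.mk' (s.p * t.p) (P.evalA ![s.p, s.d, t.p, t.d])

/-- The non-unital commutative ring structure on `SP X` induced by a special `P`. -/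
@[reducible] noncomputable def spRing {X : Type} (P : Term (Fin 4)) (hP : Special P) :
    NonUnitalCommRing (SP X) :=
  { (inferInstance : AddCommGroup (SP X)) with
    mul := spMul P
    left_distrib := by
      intro s t u
      refine SP.ext' ?_ ?_
      · show s.p * (t.p + u.p) = s.p * t.p + s.p * u.p
        ring
      · show Term.evalA P ![s.p, s.d, t.p + u.p, t.d + u.d] =
          Term.evalA P ![s.p, s.d, t.p, t.d] + Term.evalA P ![s.p, s.d, u.p, u.d]
        rw [hP.evalA_comm, hP.evalA_add, hP.evalA_comm t.p, hP.evalA_comm u.p]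
    right_distrib := by
      intro s t u
      refine SP.ext' ?_ ?_
      · show (s.p + t.p) * u.p = s.p * u.p + t.p * u.p
        ring
      · exact hP.evalA_add s.p s.d t.p t.d u.p u.d
    zero_mul := by
      intro s
      refine SP.ext' ?_ ?_
      · show (0 : MvPolynomial X ℚ) * s.p = 0
        ring
      · show Term.evalA P ![(0 : MvPolynomial X ℚ), 0, s.p, s.d] = 0
        exact hP.evalA_zero _ _
    mul_zero := by
      intro s
      refine SP.ext' ?_ ?_
      · show s.p * (0 : MvPolynomial X ℚ) = 0
        ring
      · show Term.evalA P ![s.p, s.d, (0 : MvPolynomial X ℚ), 0] = 0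
        rw [hP.evalA_comm]
        exact hP.evalA_zero _ _
    mul_assoc := by
      intro s t u
      refine SP.ext' ?_ ?_
      · show s.p * t.p * u.p = s.p * (t.p * u.p)
        ring
      · exact (hP.evalA_assoc s.p s.d t.p t.d u.p u.d).symm
    mul_comm := by
      intro s t
      refine SP.ext' ?_ ?_
      · show s.p * t.p = t.p * s.p
        ring
      · exact hP.evalA_comm s.p s.d t.p t.d }

end SPdef
/-- **Extension property.** For a special product rule `P`, every function
`D : X → ℚ[X]⁰` extends uniquely to a `ℚ`-linear map `D̃ : ℚ[X]⁰ → ℚ[X]⁰` satisfying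
`D̃(α·β) = P(α, D̃α, β, D̃β)`. -/
theorem extension_property {X : Type} (P : Term (Fin 4)) (hP : Special P)
    (D : X → Aug X) :
    ∃! Dt : Aug X →ₗ[ℚ] Aug X,
      (∀ x : X, Dt (Aug.var x) = D x) ∧
      (∀ p q : Aug X,
        ((Dt (Aug.mul p q) : Aug X) : MvPolynomial X ℚ) =
          Term.evalA P ![(p : MvPolynomial X ℚ), ((Dt p : Aug X) : MvPolynomial X ℚ),
            ((q : Aug X) : MvPolynomial X ℚ), ((Dt q : Aug X) : MvPolynomial X ℚ)]) := by
  classical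
  letI : NonUnitalCommRing (SP X) := spRing P hP
  haveI : IsScalarTower ℚ (SP X) (SP X) := ⟨by
    intro c s t
    refine SP.ext' ?_ ?_
    · show (c • s).p * t.p = c • (s.p * t.p)
      rw [SP.p_smul, smul_mul_assoc]
    · show Term.evalA P ![(c • s).p, (c • s).d, t.p, t.d] =
        c • Term.evalA P ![s.p, s.d, t.p, t.d]
      rw [SP.p_smul, SP.d_smul]
      exact hP.evalA_smul c _ _ _ _⟩
  haveI : SMulCommClass ℚ (SP X) (SP X) := ⟨by
    intro c s t
    refine SP.ext' ?_ ?_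
    · show c • (s.p * t.p) = s.p * (c • t).p
      rw [SP.p_smul, mul_smul_comm]
    · show c • Term.evalA P ![s.p, s.d, t.p, t.d] =
        Term.evalA P ![s.p, s.d, (c • t).p, (c • t).d]
      rw [SP.p_smul, SP.d_smul, hP.evalA_comm s.p s.d (c • t.p) (c • t.d),
        hP.evalA_smul c t.p t.d s.p s.d, hP.evalA_comm t.p t.d s.p s.d]⟩
  let φ : MvPolynomial X ℚ →ₐ[ℚ] Unitization ℚ (SP X) :=
    MvPolynomial.aeval (fun x : X =>
      (Unitization.inr (SP.mk' (MvPolynomial.X x) ((D x : MvPolynomial X ℚ))) :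
        Unitization ℚ (SP X)))
  have φX : ∀ x : X, φ (MvPolynomial.X x) =
      Unitization.inr (SP.mk' (MvPolynomial.X x) ((D x : MvPolynomial X ℚ))) := by
    intro x; simp [φ]
  let π1 : SP X →ₙₐ[ℚ] MvPolynomial X ℚ :=
    { toFun := SP.p
      map_smul' := fun _ _ => rfl
      map_zero' := rfl
      map_add' := fun _ _ => rfl
      map_mul' := fun _ _ => rfl }
  let ψ : Unitization ℚ (SP X) →ₐ[ℚ] MvPolynomial X ℚ := NonUnitalAlgHom.toAlgHom π1
  have ψ_apply : ∀ u : Unitization ℚ (SP X),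
      ψ u = algebraMap ℚ (MvPolynomial X ℚ) u.fst + (u.snd).p := fun u => rfl
  -- fst of φ is the constant coefficient
  have fstφ : ∀ pol : MvPolynomial X ℚ, (φ pol).fst = MvPolynomial.constantCoeff pol := by
    have h : (Unitization.fstHom ℚ (SP X)).comp φ =
        MvPolynomial.aeval (fun _ : X => (0 : ℚ)) := by
      apply MvPolynomial.algHom_ext
      intro x
      simp [φ]
    intro pol
    have h2 := congrArg (fun f => f pol) h
    simp only [AlgHom.comp_apply, Unitization.fstHom_apply] at h2
    rw [h2, MvPolynomial.aeval_zero']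
    simp
  -- ψ ∘ φ = id
  have ψφ : ∀ pol : MvPolynomial X ℚ, ψ (φ pol) = pol := by
    have h : ψ.comp φ = MvPolynomial.aeval MvPolynomial.X := by
      apply MvPolynomial.algHom_ext
      intro x
      rw [AlgHom.comp_apply, φX x, ψ_apply]
      simp
    intro pol
    have h2 := congrArg (fun f => f pol) h
    simp only [AlgHom.comp_apply] at h2
    rw [h2, MvPolynomial.aeval_X_left_apply]
  -- first snd-component of φ
  have s1' : ∀ pol : MvPolynomial X ℚ,
      ((φ pol).snd).p = pol - algebraMap ℚ (MvPolynomial X ℚ) (MvPolynomial.constantCoeff pol) := by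
    intro pol
    have := ψφ pol
    rw [ψ_apply, fstφ] at this
    linear_combination this
  have s1 : ∀ a : Aug X, ((φ (a : MvPolynomial X ℚ)).snd).p = (a : MvPolynomial X ℚ) := by
    intro a
    rw [s1']
    have h0 : MvPolynomial.constantCoeff (a : MvPolynomial X ℚ) = 0 := a.2
    rw [h0, map_zero, sub_zero]
  have s1mem : ∀ pol : MvPolynomial X ℚ, ((φ pol).snd).p ∈ Aug X := by
    intro pol
    rw [Aug.mem_iff, s1']
    simp [MvPolynomial.coeff_zero_C, ← MvPolynomial.constantCoeff_eq]
  have memd : ∀ pol : MvPolynomial X ℚ, ((φ pol).snd).d ∈ Aug X := by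
    intro pol
    induction pol using MvPolynomial.induction_on with
    | C a =>
      have : φ (MvPolynomial.C a) = algebraMap ℚ (Unitization ℚ (SP X)) a := by
        simp [φ, MvPolynomial.aeval_C]
      rw [this, Unitization.algebraMap_eq_inl, Unitization.snd_inl, SP.d_zero]
      exact (Aug X).zero_mem
    | add p q ihp ihq =>
      rw [map_add, Unitization.snd_add, SP.d_add]
      exact (Aug X).add_mem ihp ihq
    | mul_X p x ih =>
      rw [map_mul, φX x]
      rw [Unitization.snd_mul]
      simp only [Unitization.fst_inr, Unitization.snd_inr, zero_smul, add_zero]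
      have dmul : ∀ s t : SP X, (s * t).d = P.evalA ![s.p, s.d, t.p, t.d] := fun s t => rfl
      rw [SP.d_add, SP.d_smul, SP.d_mk', dmul, SP.p_mk', SP.d_mk']
      refine (Aug X).add_mem ((Aug X).smul_mem _ (D x).2) ?_
      refine Term.evalA_mem_aug P _ ?_
      intro i
      fin_cases i
      · exact s1mem p
      · exact ih
      · exact (Aug.var x).2
      · exact (D x).2
  -- the extension
  let Dt : Aug X →ₗ[ℚ] Aug X :=
    { toFun := fun a => ⟨((φ (a : MvPolynomial X ℚ)).snd).d, memd _⟩
      map_add' := by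
        intro a b
        apply Subtype.ext
        show ((φ ((a + b : Aug X) : MvPolynomial X ℚ)).snd).d = _
        rw [Submodule.coe_add, map_add, Unitization.snd_add, SP.d_add]
        rfl
      map_smul' := by
        intro c a
        apply Subtype.ext
        show ((φ ((c • a : Aug X) : MvPolynomial X ℚ)).snd).d = _
        rw [Submodule.coe_smul, map_smul, Unitization.snd_smul, SP.d_smul]
        rfl }
  have hvar : ∀ x : X, Dt (Aug.var x) = D x := by
    intro x
    apply Subtype.ext
    show ((φ ((Aug.var x : Aug X) : MvPolynomial X ℚ)).snd).d = _
    have : ((Aug.var x : Aug X) : MvPolynomial X ℚ) = MvPolynomial.X x := rfl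
    rw [this, φX x, Unitization.snd_inr, SP.d_mk']
  have hmul : ∀ p q : Aug X,
      ((Dt (Aug.mul p q) : Aug X) : MvPolynomial X ℚ) =
        Term.evalA P ![(p : MvPolynomial X ℚ), ((Dt p : Aug X) : MvPolynomial X ℚ),
          ((q : Aug X) : MvPolynomial X ℚ), ((Dt q : Aug X) : MvPolynomial X ℚ)] := by
    intro p q
    show ((φ ((Aug.mul p q : Aug X) : MvPolynomial X ℚ)).snd).d = _
    have hco : ((Aug.mul p q : Aug X) : MvPolynomial X ℚ)
        = (p : MvPolynomial X ℚ) * (q : MvPolynomial X ℚ) := rfl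
    have dmul : ∀ s t : SP X, (s * t).d = P.evalA ![s.p, s.d, t.p, t.d] := fun s t => rfl
    rw [hco, map_mul, Unitization.snd_mul, fstφ, fstφ]
    rw [show MvPolynomial.constantCoeff ((p : Aug X) : MvPolynomial X ℚ) = 0 from p.2,
      show MvPolynomial.constantCoeff ((q : Aug X) : MvPolynomial X ℚ) = 0 from q.2]
    rw [zero_smul, zero_smul, zero_add, zero_add, dmul, s1, s1]
    rfl
  refine ⟨Dt, ⟨hvar, hmul⟩, ?_⟩
  rintro Dt' ⟨hvar', hmul'⟩
  let E : Submodule ℚ (MvPolynomial X ℚ) :=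
    { carrier := {pol | ∃ hp : pol ∈ Aug X, Dt' ⟨pol, hp⟩ = Dt ⟨pol, hp⟩}
      add_mem' := by
        rintro a b ⟨ha, hea⟩ ⟨hb, heb⟩
        refine ⟨(Aug X).add_mem ha hb, ?_⟩
        have h : (⟨a + b, (Aug X).add_mem ha hb⟩ : Aug X) = ⟨a, ha⟩ + ⟨b, hb⟩ := rfl
        rw [h, map_add, map_add, hea, heb]
      zero_mem' := by
        refine ⟨(Aug X).zero_mem, ?_⟩
        have h : (⟨0, (Aug X).zero_mem⟩ : Aug X) = 0 := rfl
        rw [h, map_zero, map_zero]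
      smul_mem' := by
        rintro c a ⟨ha, hea⟩
        refine ⟨(Aug X).smul_mem c ha, ?_⟩
        have h : (⟨c • a, (Aug X).smul_mem c ha⟩ : Aug X) = c • ⟨a, ha⟩ := rfl
        rw [h, map_smul, map_smul, hea] }
  have Emul : ∀ a b : MvPolynomial X ℚ, a ∈ E → b ∈ E → a * b ∈ E := by
    rintro a b ⟨ha, hea⟩ ⟨hb, heb⟩
    refine ⟨Aug.mul_mem ha, ?_⟩
    have hab : (⟨a * b, Aug.mul_mem ha⟩ : Aug X) = Aug.mul ⟨a, ha⟩ ⟨b, hb⟩ := rfl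
    rw [hab]
    apply Subtype.ext
    rw [hmul' ⟨a, ha⟩ ⟨b, hb⟩, hmul ⟨a, ha⟩ ⟨b, hb⟩, hea, heb]
  have EX : ∀ x : X, (MvPolynomial.X x : MvPolynomial X ℚ) ∈ E := by
    intro x
    refine ⟨(Aug.var x).2, ?_⟩
    have h : (⟨MvPolynomial.X x, (Aug.var x).2⟩ : Aug X) = Aug.var x := rfl
    rw [h, hvar' x, hvar x]
  have hmono : ∀ n : ℕ, ∀ d : X →₀ ℕ, (d.sum fun _ k => k) ≤ n → d ≠ 0 →
      (MvPolynomial.monomial d (1 : ℚ) : MvPolynomial X ℚ) ∈ E := by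
    intro n
    induction n with
    | zero =>
      intro d hd hne
      exfalso
      apply hne
      ext a
      have hz : (d.sum fun _ k => k) = 0 := Nat.le_zero.mp hd
      have := Finset.sum_eq_zero_iff.mp hz
      by_cases hs : a ∈ d.support
      · exact this a hs
      · simpa using Finsupp.notMem_support_iff.mp hs
    | succ n ihn =>
      intro d hd hne
      obtain ⟨x, hx⟩ := Finsupp.support_nonempty_iff.mpr hne
      have hx1 : 1 ≤ d x := Nat.one_le_iff_ne_zero.mpr (Finsupp.mem_support_iff.mp hx)
      set d' : X →₀ ℕ := d - Finsupp.single x 1 with hd'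
      have hsplit : d = Finsupp.single x 1 + d' := by
        ext a
        by_cases hax : a = x
        · subst hax
          simp [d', Finsupp.single_apply]
          omega
        · simp [d', Finsupp.single_apply, hax, Ne.symm hax]
      have hmonsplit : (MvPolynomial.monomial d (1 : ℚ) : MvPolynomial X ℚ)
          = MvPolynomial.X x * MvPolynomial.monomial d' 1 := by
        rw [hsplit, MvPolynomial.X, MvPolynomial.monomial_mul, one_mul]
      have hsum : (d.sum fun _ k => k) = 1 + (d'.sum fun _ k => k) := by
        rw [hsplit, Finsupp.sum_add_index' (fun _ => rfl) (fun _ _ _ => rfl)]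
        simp
      by_cases hd'0 : d' = 0
      · rw [hmonsplit, hd'0]
        simpa using EX x
      · rw [hmonsplit]
        refine Emul _ _ (EX x) (ihn d' ?_ hd'0)
        omega
  have key : ∀ (pol : MvPolynomial X ℚ) (hp : pol ∈ Aug X), Dt' ⟨pol, hp⟩ = Dt ⟨pol, hp⟩ := by
    intro pol hp
    have hpolE : pol ∈ E := by
      rw [← MvPolynomial.support_sum_monomial_coeff pol]
      apply Submodule.sum_mem
      intro d _
      by_cases hd0 : d = 0
      · subst hd0
        have h0 : MvPolynomial.coeff 0 pol = 0 := hp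
        rw [h0, map_zero]
        exact E.zero_mem
      · have h1 : (MvPolynomial.monomial d (MvPolynomial.coeff d pol) : MvPolynomial X ℚ)
            = MvPolynomial.coeff d pol • MvPolynomial.monomial d 1 := by
          rw [MvPolynomial.smul_monomial, smul_eq_mul, mul_one]
        rw [h1]
        exact E.smul_mem _ (hmono (d.sum fun _ k => k) d le_rfl hd0)
    obtain ⟨hp', heq⟩ := hpolE
    have h : (⟨pol, hp⟩ : Aug X) = ⟨pol, hp'⟩ := rfl
    rw [h]
    exact heq
  apply LinearMap.ext
  rintro ⟨pol, hp⟩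
  exact key pol hp

end PSeries
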